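/- (Deterministic part (i) of the uncertainty-quantification theorem.) In the minimax-estimation setting, assume the concentration hypotheses hold with constants η₁, …, η_K and set η² = Σ_{k=1}^K η_k². If h* ∈ H satisfies Σ_{k=1}^K ‖T_k h*‖²_{μ_k,2} ≤ ε_H², then the empirical loss satisfies L_D(h*) ≤ 2ε_H² + (2L_α² + 5/4)·η². In particular, for any threshold e_D > 2ε_H² + (2L_α² + 5/4)η², h* belongs to the confidence set { h ∈ H : L_D(h) ≤ inf_{h′∈H} L_D(h′) + e_D }. -/

import Mathlib

open MeasureTheory

/-- Empirical expectation of `f` over the finite dataset `D`. -/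
noncomputable def empExp {α : Type*} {n : ℕ} (D : Fin n → α) (f : α → ℝ) : ℝ :=
  (∑ i, f (D i)) / n

/-- Deterministic part (i) of the uncertainty-quantification theorem.
In the minimax-estimation setting, under the concentration hypotheses, a realizable `h*`
with `Σ_k ‖T_k h*‖²_{μ_k,2} ≤ ε_H²` has empirical loss
`L_D(h*) ≤ 2ε_H² + (2L_α² + 5/4)η²`; in particular `h*` lies in the confidence set for any
threshold `e_D` exceeding this bound. -/
theorem minimax_uq_realizable_in_confidence_set
    {K : ℕ} {Ωf : Fin K → Type*} [mΩ : ∀ k, MeasurableSpace (Ωf k)]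
    (μ : ∀ k, Measure (Ωf k)) [∀ k, IsProbabilityMeasure (μ k)]
    (m : ∀ k, MeasurableSpace (Ωf k)) (hm : ∀ k, m k ≤ mΩ k)
    (Lα Lθ : ℝ) (hLα : 0 < Lα) (hLθ : 0 < Lθ)
    -- the datasets
    (n : Fin K → ℕ) (hn : ∀ k, 0 < n k) (D : ∀ k, Fin (n k) → Ωf k)
    -- the hypothesis class and the moment functions a_k(h)
    {H : Type*} (a : H → ∀ k, Ωf k → ℝ)
    (ha_meas : ∀ h k, Measurable (a h k))
    (ha_bdd : ∀ h k ω, |a h k ω| ≤ Lα)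
    -- the dual (test-function) classes
    (Θ : ∀ k, Set (Ωf k → ℝ))
    (hΘne : ∀ k, (Θ k).Nonempty)
    (hΘmeas : ∀ k, ∀ θ ∈ Θ k, StronglyMeasurable[m k] θ)
    (hΘbdd : ∀ k, ∀ θ ∈ Θ k, ∀ ω, |θ ω| ≤ Lθ)
    (hΘstar : ∀ k, ∀ θ ∈ Θ k, ∀ c : ℝ, 0 ≤ c → c ≤ 1 → c • θ ∈ Θ k)
    -- concentration hypotheses with constants η_k ≥ 0
    (η : Fin K → ℝ) (hη : ∀ k, 0 ≤ η k)
    (hconc1 : ∀ (h : H) (k : Fin K), ∀ θ ∈ Θ k,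
      |empExp (D k) (fun ω => a h k ω * θ ω) - ∫ ω, a h k ω * θ ω ∂(μ k)|
        ≤ η k * (Lα * Real.sqrt (∫ ω, (θ ω) ^ 2 ∂(μ k)) + η k))
    (hconc2 : ∀ (k : Fin K), ∀ θ ∈ Θ k,
      |empExp (D k) (fun ω => (θ ω) ^ 2) - ∫ ω, (θ ω) ^ 2 ∂(μ k)|
        ≤ (1 / 2) * ((∫ ω, (θ ω) ^ 2 ∂(μ k)) + (η k) ^ 2))
    -- the realizable hypothesis h*
    (εH : ℝ) (hstar : H)
    (hreal : (∑ k, ∫ ω, (((μ k)[a hstar k | m k]) ω) ^ 2 ∂(μ k)) ≤ εH ^ 2) :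
    (∑ k, ⨆ θ : (Θ k), (empExp (D k) (fun ω => a hstar k ω * (θ : Ωf k → ℝ) ω)
        - (1 / 2) * empExp (D k) (fun ω => ((θ : Ωf k → ℝ) ω) ^ 2)))
      ≤ 2 * εH ^ 2 + (2 * Lα ^ 2 + 5 / 4) * (∑ k, (η k) ^ 2) ∧
    ∀ eD : ℝ, 2 * εH ^ 2 + (2 * Lα ^ 2 + 5 / 4) * (∑ k, (η k) ^ 2) < eD →
      (∑ k, ⨆ θ : (Θ k), (empExp (D k) (fun ω => a hstar k ω * (θ : Ωf k → ℝ) ω)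
          - (1 / 2) * empExp (D k) (fun ω => ((θ : Ωf k → ℝ) ω) ^ 2)))
        ≤ (⨅ h' : H, ∑ k, ⨆ θ : (Θ k),
            (empExp (D k) (fun ω => a h' k ω * (θ : Ωf k → ℝ) ω)
              - (1 / 2) * empExp (D k) (fun ω => ((θ : Ωf k → ℝ) ω) ^ 2))) + eD := by
  classical
  haveI : Nonempty H := ⟨hstar⟩
  set B : H → Fin K → ℝ := fun h k =>
    2 * (∫ ω, (((μ k)[a h k | m k]) ω) ^ 2 ∂(μ k)) + (2 * Lα ^ 2 + 5 / 4) * (η k) ^ 2 with hB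
  have hg_nonneg : ∀ (h : H) (k : Fin K), 0 ≤ ∫ ω, (((μ k)[a h k | m k]) ω) ^ 2 ∂(μ k) :=
    fun h k => integral_nonneg fun ω => sq_nonneg _
  have hBnn : ∀ h k, 0 ≤ B h k := by
    intro h k
    have h1 := hg_nonneg h k
    have h2 := sq_nonneg (η k)
    have h3 := sq_nonneg Lα
    simp only [hB]
    nlinarith
  have key : ∀ (h : H) (k : Fin K) (θ : Ωf k → ℝ), θ ∈ Θ k →
      empExp (D k) (fun ω => a h k ω * θ ω) - (1 / 2) * empExp (D k) (fun ω => (θ ω) ^ 2)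
        ≤ B h k := by
    intro h k θ hθ
    set g := (μ k)[a h k | m k] with hg
    have hθmeas : StronglyMeasurable[mΩ k] θ := StronglyMeasurable.mono (m := mΩ k) (hΘmeas k θ hθ) (hm k)
    have ha_int : Integrable (a h k) (μ k) := by
      have hasm : AEStronglyMeasurable[mΩ k] (a h k) (μ k) :=
        ((ha_meas h k).mono (hm k) le_rfl).aestronglyMeasurable
      refine Integrable.mono' (integrable_const (μ := μ k) Lα) hasm ?_
      exact ae_of_all _ fun ω => by simpa using ha_bdd h k ω
    have hθa_int : Integrable (fun ω => θ ω * a h k ω) (μ k) :=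
      ha_int.bdd_mul hθmeas.aestronglyMeasurable (ae_of_all _ fun ω => by
        simpa using hΘbdd k θ hθ ω)
    have hθ2_int : Integrable (fun ω => (θ ω) ^ 2) (μ k) := by
      refine Integrable.mono' (integrable_const (μ := μ k) (Lθ ^ 2))
        (hθmeas.measurable.pow_const 2).aestronglyMeasurable (ae_of_all _ fun ω => ?_)
      rw [Real.norm_eq_abs, abs_of_nonneg (sq_nonneg _)]
      have h1 := hΘbdd k θ hθ ω
      nlinarith [abs_nonneg (θ ω), sq_abs (θ ω)]
    have hg_meas : StronglyMeasurable[mΩ k] g := StronglyMeasurable.mono (m := mΩ k) stronglyMeasurable_condExp (hm k)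
    have hg_bdd : ∀ᵐ ω ∂(μ k), |g ω| ≤ (Lα.toNNReal : ℝ) :=
      ae_bdd_condExp_of_ae_bdd (ae_of_all _ fun ω => by
        simpa [Real.coe_toNNReal _ hLα.le] using ha_bdd h k ω)
    have hg2_int : Integrable (fun ω => (g ω) ^ 2) (μ k) := by
      refine Integrable.mono' (integrable_const (μ := μ k) (Lα ^ 2))
        (hg_meas.measurable.pow_const 2).aestronglyMeasurable ?_
      filter_upwards [hg_bdd] with ω hω
      rw [Real.norm_eq_abs, abs_of_nonneg (sq_nonneg _)]
      have h1 : |g ω| ≤ Lα := by simpa [Real.coe_toNNReal _ hLα.le] using hω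
      nlinarith [abs_nonneg (g ω), sq_abs (g ω)]
    have hθg_int : Integrable (fun ω => θ ω * g ω) (μ k) :=
      integrable_condExp.bdd_mul hθmeas.aestronglyMeasurable (ae_of_all _ fun ω => by
        simpa using hΘbdd k θ hθ ω)
    haveI : SigmaFinite ((μ k).trim (hm k)) := by
      have : IsFiniteMeasure ((μ k).trim (hm k)) := isFiniteMeasure_trim (hm k)
      infer_instance
    have hpull : (μ k)[(fun ω => θ ω * a h k ω) | m k] =ᵐ[μ k] fun ω => θ ω * g ω := by
      have h1 := condExp_mul_of_stronglyMeasurable_left (μ := μ k) (hΘmeas k θ hθ)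
        (g := a h k) (by exact hθa_int) ha_int
      exact h1
    have hIeq : ∫ ω, a h k ω * θ ω ∂(μ k) = ∫ ω, θ ω * g ω ∂(μ k) := by
      have h1 : ∫ ω, a h k ω * θ ω ∂(μ k) = ∫ ω, θ ω * a h k ω ∂(μ k) :=
        integral_congr_ae (ae_of_all _ fun ω => mul_comm _ _)
      have h2 : ∫ ω, ((μ k)[(fun ω => θ ω * a h k ω) | m k]) ω ∂(μ k)
          = ∫ ω, θ ω * a h k ω ∂(μ k) := integral_condExp (hm k)
      have h3 := integral_congr_ae hpull
      rw [h1, ← h2, h3]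
    have hCS : ∫ ω, θ ω * g ω ∂(μ k)
        ≤ (1 / 8) * (∫ ω, (θ ω) ^ 2 ∂(μ k)) + 2 * (∫ ω, (g ω) ^ 2 ∂(μ k)) := by
      have h1 : ∫ ω, θ ω * g ω ∂(μ k)
          ≤ ∫ ω, ((1 / 8) * (θ ω) ^ 2 + 2 * (g ω) ^ 2) ∂(μ k) := by
        refine integral_mono hθg_int ((hθ2_int.const_mul (1 / 8)).add (hg2_int.const_mul 2))
          (fun ω => ?_)
        nlinarith [sq_nonneg (θ ω - 4 * g ω)]
      rwa [integral_add (hθ2_int.const_mul _) (hg2_int.const_mul _), integral_const_mul,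
        integral_const_mul] at h1
    have hI2nn : 0 ≤ ∫ ω, (θ ω) ^ 2 ∂(μ k) := integral_nonneg fun ω => sq_nonneg _
    set I2 := ∫ ω, (θ ω) ^ 2 ∂(μ k) with hI2
    set t := ∫ ω, (g ω) ^ 2 ∂(μ k) with ht
    set s := Real.sqrt I2 with hs
    have hs2 : s ^ 2 = I2 := Real.sq_sqrt hI2nn
    have hc1 := abs_le.mp (hconc1 h k θ hθ)
    have hc2 := abs_le.mp (hconc2 k θ hθ)
    have hamg : η k * (Lα * s) ≤ (1 / 8) * I2 + 2 * Lα ^ 2 * (η k) ^ 2 := by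
      nlinarith [sq_nonneg (s - 4 * η k * Lα)]
    have hexp : η k * (Lα * s + η k) = η k * (Lα * s) + (η k) ^ 2 := by ring
    have hc1' := hc1.2
    have hc2' := hc2.1
    simp only [hB]
    rw [← hg, ← ht]
    linarith [hIeq, hCS, hc1', hc2', hamg, hs2.le, hs2.ge,
      (by linarith [hc1'] : empExp (D k) (fun ω => a h k ω * θ ω)
        ≤ (∫ ω, a h k ω * θ ω ∂(μ k)) + (η k * (Lα * s) + (η k) ^ 2))]
  have hsup_le : ∀ (h : H) (k : Fin K),
      (⨆ θ : (Θ k), (empExp (D k) (fun ω => a h k ω * (θ : Ωf k → ℝ) ω)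
        - (1 / 2) * empExp (D k) (fun ω => ((θ : Ωf k → ℝ) ω) ^ 2))) ≤ B h k :=
    fun h k => Real.iSup_le (fun θ => key h k θ θ.2) (hBnn h k)
  have hsup_nn : ∀ (h : H) (k : Fin K),
      0 ≤ ⨆ θ : (Θ k), (empExp (D k) (fun ω => a h k ω * (θ : Ωf k → ℝ) ω)
        - (1 / 2) * empExp (D k) (fun ω => ((θ : Ωf k → ℝ) ω) ^ 2)) := by
    intro h k
    obtain ⟨θ₀, hθ₀⟩ := hΘne k
    have hz : (0 : ℝ) • θ₀ ∈ Θ k := hΘstar k θ₀ hθ₀ 0 le_rfl zero_le_one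
    have hbdd : BddAbove (Set.range fun θ : (Θ k) =>
        (empExp (D k) (fun ω => a h k ω * (θ : Ωf k → ℝ) ω)
          - (1 / 2) * empExp (D k) (fun ω => ((θ : Ωf k → ℝ) ω) ^ 2))) := by
      refine ⟨B h k, ?_⟩
      rintro x ⟨θ, rfl⟩
      exact key h k θ θ.2
    have hle := le_ciSup hbdd (⟨(0 : ℝ) • θ₀, hz⟩ : Θ k)
    simpa [empExp] using hle
  have hpart1 : (∑ k, ⨆ θ : (Θ k), (empExp (D k) (fun ω => a hstar k ω * (θ : Ωf k → ℝ) ω)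
        - (1 / 2) * empExp (D k) (fun ω => ((θ : Ωf k → ℝ) ω) ^ 2)))
      ≤ 2 * εH ^ 2 + (2 * Lα ^ 2 + 5 / 4) * (∑ k, (η k) ^ 2) := by
    have h1 : (∑ k, ⨆ θ : (Θ k), (empExp (D k) (fun ω => a hstar k ω * (θ : Ωf k → ℝ) ω)
        - (1 / 2) * empExp (D k) (fun ω => ((θ : Ωf k → ℝ) ω) ^ 2))) ≤ ∑ k, B hstar k :=
      Finset.sum_le_sum fun k _ => hsup_le hstar k
    have h2 : ∑ k, B hstar k
        = 2 * (∑ k, ∫ ω, (((μ k)[a hstar k | m k]) ω) ^ 2 ∂(μ k))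
          + (2 * Lα ^ 2 + 5 / 4) * ∑ k, (η k) ^ 2 := by
      simp only [hB]
      rw [Finset.sum_add_distrib, ← Finset.mul_sum, ← Finset.mul_sum]
    have hηnn : 0 ≤ ∑ k, (η k) ^ 2 := Finset.sum_nonneg fun k _ => sq_nonneg _
    rw [h2] at h1
    linarith
  refine ⟨hpart1, fun eD heD => ?_⟩
  have hinf : 0 ≤ ⨅ h' : H, ∑ k, ⨆ θ : (Θ k),
      (empExp (D k) (fun ω => a h' k ω * (θ : Ωf k → ℝ) ω)
        - (1 / 2) * empExp (D k) (fun ω => ((θ : Ωf k → ℝ) ω) ^ 2)) :=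
    Real.iInf_nonneg fun h' => Finset.sum_nonneg fun k _ => hsup_nn h' k
  linarith
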